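/- Every complete graph K_{k+1} with k even admits a hamiltonian decomposition into k/2 edge-disjoint Hamilton cycles together with a transversal: a matching containing exactly one edge from each of the k/2 Hamilton cycles. -/

import Mathlib

open SimpleGraph
set_option linter.unusedSectionVars false

/-- Build a walk in the complete graph from a vertex function. -/
def pathW {V : Type*} [DecidableEq V] (f : ℕ → V) :
    (n : ℕ) → (h : ∀ j < n, f j ≠ f (j+1)) → (⊤ : SimpleGraph V).Walk (f 0) (f n)
  | 0, _ => .nil
  | n+1, h => (pathW f n fun j hj => h j (by omega)).concat
      (by simp only [SimpleGraph.top_adj]; exact h n (by omega))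

lemma pathW_support {V : Type*} [DecidableEq V] (f : ℕ → V) (n : ℕ) (h : ∀ j < n, f j ≠ f (j+1)) :
    (pathW f n h).support = (List.range (n+1)).map f := by
  induction n with
  | zero => simp [pathW, List.range_succ]
  | succ n ih =>
      rw [pathW, SimpleGraph.Walk.support_concat, ih, List.range_succ (n := n+1)]
      simp

lemma pathW_edges {V : Type*} [DecidableEq V] (f : ℕ → V) (n : ℕ) (h : ∀ j < n, f j ≠ f (j+1)) :
    (pathW f n h).edges = (List.range n).map (fun j => s(f j, f (j+1))) := by
  induction n with
  | zero => simp [pathW]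
  | succ n ih =>
      rw [pathW, SimpleGraph.Walk.edges_concat, ih, List.range_succ]
      simp


section Walecki
variable (k : ℕ)

/-- Offset value of the Walecki zig-zag path, as a natural number `< k`. -/
def wA (j : ℕ) : ℕ := if j % 2 = 0 then (if j = 0 then 0 else k - j / 2) else j / 2 + 1

lemma wA_lt (hk2 : 2 ≤ k) {j : ℕ} (hj : j < k) : wA k j < k := by
  unfold wA; split_ifs <;> omega

variable {m : ℕ} (hk : k = 2 * m)

include hk in
lemma wA_inj {j j' : ℕ} (hj : j < k) (hj' : j' < k) (h : wA k j = wA k j') : j = j' := by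
  unfold wA at h; split_ifs at h <;> omega

lemma wA_surj {v : ℕ} (hv : v < k) : ∃ j < k, wA k j = v := by
  rcases Nat.lt_or_ge v (k/2 + 1) with h | h
  · rcases Nat.eq_zero_or_pos v with rfl | hv0
    · exact ⟨0, by omega, by simp [wA]⟩
    · refine ⟨2*v - 1, by omega, ?_⟩
      unfold wA; split_ifs <;> omega
  · refine ⟨2*(k-v), by omega, ?_⟩
    unfold wA; split_ifs <;> omega

end Walecki

section Walecki2
variable (k : ℕ) [NeZero k]

/-- The embedding of `ZMod k` into `Fin (k+1)`. -/
def wemb (x : ZMod k) : Fin (k+1) := ⟨x.val, by have := ZMod.val_lt x; omega⟩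

/-- The extra vertex `∞`. -/
def winf : Fin (k+1) := ⟨k, Nat.lt_succ_self k⟩

/-- Offsets as elements of `ZMod k`. -/
def wa (j : ℕ) : ZMod k := (wA k j : ZMod k)

/-- Vertex `j` of the `x`-th Walecki hamiltonian cycle. -/
def wF (x : ZMod k) (j : ℕ) : Fin (k+1) :=
  if 1 ≤ j ∧ j ≤ k then wemb k (x + wa k (j-1)) else winf k

lemma wemb_inj {x y : ZMod k} (h : wemb k x = wemb k y) : x = y := by
  have : x.val = y.val := congrArg Fin.val h
  exact ZMod.val_injective k this

lemma wemb_ne_winf (x : ZMod k) : wemb k x ≠ winf k := by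
  intro h
  have : x.val = k := congrArg Fin.val h
  have := ZMod.val_lt x
  omega

lemma wa_val {j : ℕ} (hk2 : 2 ≤ k) (hj : j < k) : (wa k j).val = wA k j :=
  ZMod.val_cast_of_lt (wA_lt k hk2 hj)

lemma winj (hk2 : 2 ≤ k) (x : ZMod k) {j j' : ℕ} {m : ℕ} (hk : k = 2 * m)
    (hj : j < k) (hj' : j' < k) (h : x + wa k j = x + wa k j') : j = j' := by
  have h2 : wa k j = wa k j' := by
    have := add_left_cancel h
    exact this
  have h3 : (wa k j).val = (wa k j').val := congrArg ZMod.val h2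
  rw [wa_val k hk2 hj, wa_val k hk2 hj'] at h3
  exact wA_inj k hk hj hj' h3

lemma wa_zero : wa k 0 = 0 := by simp [wa, wA]

lemma wa_even {t : ℕ} (ht : t ≤ k) : wa k (2*t) = -(t : ZMod k) := by
  rcases Nat.eq_zero_or_pos t with rfl | ht0
  · simp [wa, wA]
  · have h1 : (2*t) % 2 = 0 := by omega
    have h2 : ¬ (2*t = 0) := by omega
    have h3 : (2*t)/2 = t := by omega
    simp only [wa, wA, h1, if_true, h2, if_false, h3, ite_false, ite_true]
    rw [Nat.cast_sub ht, ZMod.natCast_self, zero_sub]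

lemma wa_odd (t : ℕ) : wa k (2*t+1) = (t : ZMod k) + 1 := by
  have h1 : (2*t+1) % 2 = 1 := by omega
  have h3 : (2*t+1)/2 = t := by omega
  simp only [wa, wA, h1, h3]
  norm_num

lemma wF_zero (x : ZMod k) : wF k x 0 = winf k := by simp [wF]

lemma wF_top (x : ZMod k) {j : ℕ} (hj : k < j) : wF k x j = winf k := by
  have : ¬ (1 ≤ j ∧ j ≤ k) := by omega
  simp [wF, this]

lemma wF_mid (x : ZMod k) {j : ℕ} (h1 : 1 ≤ j) (h2 : j ≤ k) :
    wF k x j = wemb k (x + wa k (j-1)) := by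
  simp [wF, h1, h2]

lemma wF_adj {m : ℕ} (hk : k = 2 * m) (hm : 1 ≤ m) (x : ZMod k) :
    ∀ j < k + 1, wF k x j ≠ wF k x (j+1) := by
  have hk2 : 2 ≤ k := by omega
  intro j hj
  rcases Nat.eq_zero_or_pos j with rfl | hj0
  · rw [wF_zero, wF_mid k x (by omega) (by omega)]
    exact fun h => wemb_ne_winf k _ h.symm
  rcases Nat.lt_or_ge j k with hjk | hjk
  · rw [wF_mid k x (by omega) (by omega), wF_mid k x (by omega) (by omega)]
    intro h
    have := winj k hk2 x hk (by omega : j - 1 < k) (by omega : (j+1)-1 < k) (wemb_inj k h)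
    omega
  · have hjk' : j = k := by omega
    rw [wF_mid k x (by omega) (by omega), wF_top k x (by omega)]
    exact wemb_ne_winf k _

end Walecki2

section Walecki3
variable (k : ℕ) [NeZero k] {m : ℕ}

/-- The `x`-th Walecki hamiltonian cycle as a closed walk at `winf`. -/
def wWalk (x : ZMod k) (hk : k = 2 * m) (hm : 1 ≤ m) :
    (⊤ : SimpleGraph (Fin (k+1))).Walk (winf k) (winf k) :=
  (pathW (wF k x) (k+1) (wF_adj k hk hm x)).copy (wF_zero k x) (wF_top k x (by omega))

lemma wWalk_support (x : ZMod k) (hk : k = 2 * m) (hm : 1 ≤ m) :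
    (wWalk k x hk hm).support = (List.range (k+2)).map (wF k x) := by
  rw [wWalk, SimpleGraph.Walk.support_copy, pathW_support]

lemma wWalk_edges (x : ZMod k) (hk : k = 2 * m) (hm : 1 ≤ m) :
    (wWalk k x hk hm).edges
      = (List.range (k+1)).map (fun j => s(wF k x j, wF k x (j+1))) := by
  rw [wWalk, SimpleGraph.Walk.edges_copy, pathW_edges]

lemma wWalk_support_tail (x : ZMod k) (hk : k = 2 * m) (hm : 1 ≤ m) :
    (wWalk k x hk hm).support.tail = (List.range (k+1)).map (fun j => wF k x (j+1)) := by
  rw [wWalk_support, List.range_succ_eq_map]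
  simp [List.map_map, Function.comp_def]

/-- `wF` is injective apart from the identification of the two endpoints `0` and `k+1`. -/
lemma wF_eq (x : ZMod k) (hk : k = 2 * m) (hm : 1 ≤ m) {j i : ℕ}
    (hj : j ≤ k+1) (hi : i ≤ k+1) (h : wF k x j = wF k x i) :
    j = i ∨ (j = 0 ∧ i = k+1) ∨ (i = 0 ∧ j = k+1) := by
  have hk2 : 2 ≤ k := by omega
  by_cases hj1 : 1 ≤ j ∧ j ≤ k
  · by_cases hi1 : 1 ≤ i ∧ i ≤ k
    · left
      rw [wF_mid k x hj1.1 hj1.2, wF_mid k x hi1.1 hi1.2] at h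
      have := winj k hk2 x hk (by omega : j - 1 < k) (by omega : i - 1 < k) (wemb_inj k h)
      omega
    · exfalso
      have hiv : wF k x i = winf k := by
        rcases (by omega : i = 0 ∨ i = k+1) with h' | h'
        · rw [h']; exact wF_zero k x
        · exact wF_top k x (by omega)
      rw [wF_mid k x hj1.1 hj1.2, hiv] at h
      exact wemb_ne_winf k _ h
  · by_cases hi1 : 1 ≤ i ∧ i ≤ k
    · exfalso
      have hjv : wF k x j = winf k := by
        rcases (by omega : j = 0 ∨ j = k+1) with h' | h'
        · rw [h']; exact wF_zero k x
        · exact wF_top k x (by omega)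
      rw [wF_mid k x hi1.1 hi1.2, hjv] at h
      exact wemb_ne_winf k _ h.symm
    · omega

lemma wWalk_tail_nodup (x : ZMod k) (hk : k = 2 * m) (hm : 1 ≤ m) :
    (wWalk k x hk hm).support.tail.Nodup := by
  rw [wWalk_support_tail]
  refine List.Nodup.map_on ?_ List.nodup_range
  intro j hj j' hj' h
  rw [List.mem_range] at hj hj'
  have := wF_eq k x hk hm (by omega : j+1 ≤ k+1) (by omega : j'+1 ≤ k+1) h
  omega

lemma wWalk_tail_mem (x : ZMod k) (hk : k = 2 * m) (hm : 1 ≤ m) (v : Fin (k+1)) :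
    v ∈ (wWalk k x hk hm).support.tail := by
  have hk2 : 2 ≤ k := by omega
  rw [wWalk_support_tail]
  rw [List.mem_map]
  by_cases hv : (v : ℕ) = k
  · refine ⟨k, by simp, ?_⟩
    rw [wF_top k x (by omega)]
    exact Fin.ext (by simpa [winf] using hv.symm)
  · have hvk : (v : ℕ) < k := by have := v.isLt; omega
    set y : ZMod k := ((v : ℕ) : ZMod k) with hy
    obtain ⟨j, hjk, hAj⟩ := wA_surj k (v := (y - x).val) (ZMod.val_lt _)
    refine ⟨j, by simp; omega, ?_⟩
    rw [wF_mid k x (by omega) (by omega)]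
    have h1 : wa k j = y - x := by
      rw [wa, hAj, ZMod.natCast_rightInverse _]
    have h2 : x + wa k (j + 1 - 1) = y := by
      simp only [Nat.add_sub_cancel]
      rw [h1]; ring
    rw [h2]
    have hyv : y.val = (v : ℕ) := by rw [hy, ZMod.val_natCast]; exact Nat.mod_eq_of_lt hvk
    exact Fin.ext hyv

lemma wWalk_edges_nodup (x : ZMod k) (hk : k = 2 * m) (hm : 1 ≤ m) :
    (wWalk k x hk hm).edges.Nodup := by
  have hk2 : 2 ≤ k := by omega
  rw [wWalk_edges]
  refine List.Nodup.map_on ?_ List.nodup_range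
  intro j hj j' hj' h
  rw [List.mem_range] at hj hj'
  rw [Sym2.eq_iff] at h
  rcases h with ⟨h1, h2⟩ | ⟨h1, h2⟩
  · have := wF_eq k x hk hm (by omega : j ≤ k+1) (by omega : j' ≤ k+1) h1
    have := wF_eq k x hk hm (by omega : j+1 ≤ k+1) (by omega : j'+1 ≤ k+1) h2
    omega
  · have := wF_eq k x hk hm (by omega : j ≤ k+1) (by omega : j'+1 ≤ k+1) h1
    have := wF_eq k x hk hm (by omega : j+1 ≤ k+1) (by omega : j' ≤ k+1) h2
    omega

lemma wWalk_isHamCycle (x : ZMod k) (hk : k = 2 * m) (hm : 1 ≤ m) :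
    (wWalk k x hk hm).IsHamiltonianCycle := by
  rw [SimpleGraph.Walk.isHamiltonianCycle_iff_isCycle_and_support_count_tail_eq_one]
  constructor
  · refine ⟨⟨⟨wWalk_edges_nodup k x hk hm⟩, ?_⟩, wWalk_tail_nodup k x hk hm⟩
    intro hnil
    have h1 := congrArg SimpleGraph.Walk.support hnil
    rw [wWalk_support, SimpleGraph.Walk.support_nil] at h1
    have := congrArg List.length h1
    simp at this
  · intro a
    exact List.count_eq_one_of_mem (wWalk_tail_nodup k x hk hm) (wWalk_tail_mem k x hk hm a)

end Walecki3

section Walecki4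
variable (k : ℕ) [NeZero k] {m : ℕ}

lemma wEdge0 (x : ZMod k) (hk : k = 2 * m) (hm : 1 ≤ m) :
    s(wF k x 0, wF k x 1) = s(winf k, wemb k x) := by
  rw [wF_zero, wF_mid k x le_rfl (by omega)]
  simp [wa_zero]

lemma wa_last (hk : k = 2 * m) (hm : 1 ≤ m) : wa k (k-1) = (m : ZMod k) := by
  have h : k - 1 = 2*(m-1)+1 := by omega
  rw [h, wa_odd, Nat.cast_sub hm]
  ring

lemma wEdgeK (x : ZMod k) (hk : k = 2 * m) (hm : 1 ≤ m) :
    s(wF k x k, wF k x (k+1)) = s(wemb k (x + (m : ZMod k)), winf k) := by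
  rw [wF_top k x (j := k+1) (by omega), wF_mid k x (j := k) (by omega) le_rfl, wa_last k hk hm]

lemma wEdgeMid (x : ZMod k) {j : ℕ} (h1 : 1 ≤ j) (h2 : j ≤ k - 1) (hk : k = 2 * m)
    (hm : 1 ≤ m) :
    s(wF k x j, wF k x (j+1)) = s(wemb k (x + wa k (j-1)), wemb k (x + wa k j)) := by
  rw [wF_mid k x h1 (by omega), wF_mid k x (by omega) (by omega)]
  simp

lemma wa_sum {j : ℕ} (h1 : 1 ≤ j) (h2 : j ≤ k - 1) (hk : k = 2 * m) (hm : 1 ≤ m) :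
    wa k (j-1) + wa k j = ((if j % 2 = 0 then 0 else 1 : ℕ) : ZMod k) := by
  rcases Nat.even_or_odd j with ⟨r, hr⟩ | ⟨r, hr⟩
  · obtain ⟨t, rfl, ht1⟩ : ∃ t, j = 2*t ∧ 1 ≤ t := ⟨r, by omega, by omega⟩
    have h3 : 2*t - 1 = 2*(t-1)+1 := by omega
    have h4 : (2*t) % 2 = 0 := by omega
    rw [h3, wa_odd, wa_even k (by omega : t ≤ k), Nat.cast_sub ht1]
    simp only [h4, if_pos]
    push_cast
    ring
  · obtain ⟨t, rfl⟩ : ∃ t, j = 2*t+1 := ⟨r, by omega⟩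
    have h3 : 2*t+1 - 1 = 2*t := by omega
    have h4 : ¬ ((2*t+1) % 2 = 0) := by omega
    rw [h3, wa_odd, wa_even k (by omega : t ≤ k)]
    simp only [h4, if_neg, if_false]
    push_cast
    ring

end Walecki4

section Walecki5
variable (k : ℕ) [NeZero k] {m : ℕ}

lemma wEdge_classify (x : ZMod k) (hk : k = 2 * m) (hm : 1 ≤ m) {j : ℕ} (hj : j ≤ k) :
    (s(wF k x j, wF k x (j+1)) = s(winf k, wemb k x)) ∨
    (s(wF k x j, wF k x (j+1)) = s(winf k, wemb k (x + (m : ZMod k)))) ∨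
    (∃ (ε : ℕ) (u v : ZMod k), ε ≤ 1 ∧ u + v = 2*x + (ε : ZMod k) ∧
      s(wF k x j, wF k x (j+1)) = s(wemb k u, wemb k v)) := by
  rcases (by omega : j = 0 ∨ j = k ∨ (1 ≤ j ∧ j ≤ k - 1)) with rfl | hjk | ⟨hj1, hj2⟩
  · exact Or.inl (wEdge0 k x hk hm)
  · rw [hjk]
    exact Or.inr (Or.inl ((wEdgeK k x hk hm).trans (Sym2.eq_swap)))
  · refine Or.inr (Or.inr ⟨if j % 2 = 0 then 0 else 1, x + wa k (j-1), x + wa k j, ?_, ?_, ?_⟩)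
    · split <;> omega
    · rw [show x + wa k (j-1) + (x + wa k j) = 2*x + (wa k (j-1) + wa k j) by ring,
        wa_sum k hj1 hj2 hk hm]
    · exact wEdgeMid k x hj1 hj2 hk hm

lemma wcast_val (hk : k = 2 * m) (hm : 1 ≤ m) {n : ℕ} (hn : n < k) :
    ((n : ZMod k)).val = n := ZMod.val_cast_of_lt hn

lemma wDisj (hk : k = 2 * m) (hm : 1 ≤ m) {iv iv' : ℕ} (h1 : iv < m) (h2 : iv' < m)
    (hne : iv ≠ iv') (e : Sym2 (Fin (k+1)))
    (he : e ∈ (wWalk k (iv : ZMod k) hk hm).edges) :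
    e ∉ (wWalk k (iv' : ZMod k) hk hm).edges := by
  intro he'
  rw [wWalk_edges, List.mem_map] at he he'
  obtain ⟨j, hj, hej⟩ := he
  obtain ⟨j', hj', hej'⟩ := he'
  rw [List.mem_range] at hj hj'
  have hc := wEdge_classify k (iv : ZMod k) hk hm (by omega : j ≤ k)
  have hc' := wEdge_classify k (iv' : ZMod k) hk hm (by omega : j' ≤ k)
  rw [hej] at hc
  rw [hej'] at hc'
  -- helper equalities
  have hxv : ((iv : ZMod k)).val = iv := wcast_val k hk hm (by omega)
  have hxv' : ((iv' : ZMod k)).val = iv' := wcast_val k hk hm (by omega)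
  have hxm : ((iv : ZMod k) + (m : ZMod k)) = ((iv + m : ℕ) : ZMod k) := by push_cast; ring
  have hxm' : ((iv' : ZMod k) + (m : ZMod k)) = ((iv' + m : ℕ) : ZMod k) := by push_cast; ring
  rcases hc with h | h | ⟨ε, u, v, hε, huv, h⟩ <;>
    rcases hc' with h' | h' | ⟨ε', u', v', hε', huv', h'⟩
  -- inf-edge vs inf-edge (4 cases)
  · rw [h'] at h
    rw [Sym2.eq_iff] at h
    rcases h with ⟨-, h⟩ | ⟨h, -⟩
    · have := congrArg ZMod.val (wemb_inj k h)
      rw [hxv, hxv'] at this; omega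
    · exact wemb_ne_winf k _ h.symm
  · rw [h'] at h
    rw [Sym2.eq_iff] at h
    rcases h with ⟨-, h⟩ | ⟨h, -⟩
    · have h2' := wemb_inj k h
      rw [hxm'] at h2'
      have := congrArg ZMod.val h2'
      rw [hxv, wcast_val k hk hm (by omega : iv' + m < k)] at this; omega
    · exact wemb_ne_winf k _ h.symm
  · rw [h'] at h
    rw [Sym2.eq_iff] at h
    rcases h with ⟨ha, hb⟩ | ⟨ha, hb⟩ <;>
      first
        | exact wemb_ne_winf k _ ha | exact wemb_ne_winf k _ ha.symm
        | exact wemb_ne_winf k _ hb | exact wemb_ne_winf k _ hb.symm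
  · rw [h'] at h
    rw [Sym2.eq_iff] at h
    rcases h with ⟨-, h⟩ | ⟨h, -⟩
    · have h2' := wemb_inj k h
      rw [hxm] at h2'
      have := congrArg ZMod.val h2'
      rw [hxv', wcast_val k hk hm (by omega : iv + m < k)] at this; omega
    · exact wemb_ne_winf k _ h.symm
  · rw [h'] at h
    rw [Sym2.eq_iff] at h
    rcases h with ⟨-, h⟩ | ⟨h, -⟩
    · have h2' := wemb_inj k h
      rw [hxm, hxm'] at h2'
      have := congrArg ZMod.val h2'
      rw [wcast_val k hk hm (by omega : iv + m < k),
        wcast_val k hk hm (by omega : iv' + m < k)] at this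
      omega
    · exact wemb_ne_winf k _ h.symm
  · rw [h'] at h
    rw [Sym2.eq_iff] at h
    rcases h with ⟨ha, hb⟩ | ⟨ha, hb⟩ <;>
      first
        | exact wemb_ne_winf k _ ha | exact wemb_ne_winf k _ ha.symm
        | exact wemb_ne_winf k _ hb | exact wemb_ne_winf k _ hb.symm
  · rw [h'] at h
    rw [Sym2.eq_iff] at h
    rcases h with ⟨ha, hb⟩ | ⟨ha, hb⟩ <;>
      first
        | exact wemb_ne_winf k _ ha | exact wemb_ne_winf k _ ha.symm
        | exact wemb_ne_winf k _ hb | exact wemb_ne_winf k _ hb.symm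
  · rw [h'] at h
    rw [Sym2.eq_iff] at h
    rcases h with ⟨ha, hb⟩ | ⟨ha, hb⟩ <;>
      first
        | exact wemb_ne_winf k _ ha | exact wemb_ne_winf k _ ha.symm
        | exact wemb_ne_winf k _ hb | exact wemb_ne_winf k _ hb.symm
  -- mid vs mid
  · rw [h'] at h
    rw [Sym2.eq_iff] at h
    have hsum : u + v = u' + v' := by
      rcases h with ⟨ha, hb⟩ | ⟨ha, hb⟩
      · rw [wemb_inj k ha, wemb_inj k hb]
      · rw [wemb_inj k ha, wemb_inj k hb]; ring
    rw [huv, huv'] at hsum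
    have hsum2 : ((2*iv + ε : ℕ) : ZMod k) = ((2*iv' + ε' : ℕ) : ZMod k) := by
      push_cast
      push_cast at hsum
      linear_combination hsum
    have := congrArg ZMod.val hsum2
    rw [wcast_val k hk hm (by omega : 2*iv + ε < k),
      wcast_val k hk hm (by omega : 2*iv' + ε' < k)] at this
    omega

end Walecki5

section Walecki6
variable (k : ℕ) [NeZero k] {m : ℕ}

lemma wembv (w : Fin (k+1)) (hw : (w : ℕ) < k) : wemb k (((w : ℕ) : ZMod k)) = w :=
  Fin.ext (ZMod.val_cast_of_lt hw)

lemma wWalk_edge_mem (x : ZMod k) (hk : k = 2 * m) (hm : 1 ≤ m) {j : ℕ} (hj : j ≤ k) :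
    s(wF k x j, wF k x (j+1)) ∈ (wWalk k x hk hm).edges := by
  rw [wWalk_edges]
  exact List.mem_map.mpr ⟨j, List.mem_range.mpr (by omega), rfl⟩

lemma wCover_inf (hk : k = 2 * m) (hm : 1 ≤ m) (w : Fin (k+1)) (hw : (w : ℕ) < k) :
    ∃ iv < m, s(winf k, w) ∈ (wWalk k ((iv : ℕ) : ZMod k) hk hm).edges := by
  rcases Nat.lt_or_ge (w : ℕ) m with h | h
  · refine ⟨(w : ℕ), h, ?_⟩
    have := wWalk_edge_mem k (((w:ℕ) : ZMod k)) hk hm (j := 0) (by omega)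
    rwa [wEdge0 k _ hk hm, wembv k w hw] at this
  · refine ⟨(w : ℕ) - m, by omega, ?_⟩
    have := wWalk_edge_mem k ((((w:ℕ) - m : ℕ) : ZMod k)) hk hm (j := k) (by omega)
    rw [wEdgeK k _ hk hm] at this
    have hc : (((w:ℕ) - m : ℕ) : ZMod k) + (m : ZMod k) = (((w:ℕ) : ℕ) : ZMod k) := by
      rw [← Nat.cast_add]
      congr 1
      omega
    rw [hc, wembv k w hw] at this
    rwa [Sym2.eq_swap] at this

lemma wCover_mid (hk : k = 2 * m) (hm : 1 ≤ m) (u v : Fin (k+1))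
    (hu : (u : ℕ) < k) (hv : (v : ℕ) < k) (huv : u ≠ v) :
    ∃ iv < m, s(u, v) ∈ (wWalk k ((iv : ℕ) : ZMod k) hk hm).edges := by
  have hk2 : 2 ≤ k := by omega
  set yu : ZMod k := (((u:ℕ)) : ZMod k) with hyu
  set yv : ZMod k := (((v:ℕ)) : ZMod k) with hyv0
  have hemu : wemb k yu = u := wembv k u hu
  have hemv : wemb k yv = v := wembv k v hv
  have hyune : yu ≠ yv := by
    intro h
    apply huv
    rw [← hemu, ← hemv, h]
  set sv : ℕ := (yu + yv).val with hsv
  have hs : ((sv : ℕ) : ZMod k) = yu + yv := ZMod.natCast_rightInverse _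
  have hsvk : sv < k := ZMod.val_lt _
  set iv : ℕ := sv / 2 with hiv
  have hivm : iv < m := by omega
  set x : ZMod k := ((iv : ℕ) : ZMod k) with hx
  set du : ℕ := (yu - x).val with hdu0
  have hduk : du < k := ZMod.val_lt _
  have hdu : x + (du : ZMod k) = yu := by
    have : ((du : ℕ) : ZMod k) = yu - x := ZMod.natCast_rightInverse _
    rw [this]; ring
  rcases Nat.even_or_odd sv with ⟨r, hr⟩ | ⟨r, hr⟩
  · -- even sum, sv = 2 * iv
    have hsv2 : sv = 2 * iv := by omega
    have hsum : yu + yv = 2*x := by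
      rw [← hs, hsv2]; push_cast; ring
    have hyv : yv = x - (du : ZMod k) := by linear_combination hsum + hdu
    have hdune : du ≠ 0 := by
      intro h
      apply hyune
      rw [hyv, ← hdu, h]
      push_cast
      ring
    have hdunem : du ≠ m := by
      intro h
      apply hyune
      have hmm : (m : ZMod k) + (m : ZMod k) = 0 := by
        rw [← Nat.cast_add, show m + m = k by omega, ZMod.natCast_self]
      rw [hyv, ← hdu, h]
      linear_combination hmm
    rcases Nat.lt_or_ge du m with h | h
    · -- j = 2*du
      refine ⟨iv, hivm, ?_⟩
      have hmem := wWalk_edge_mem k x hk hm (j := 2*du) (by omega)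
      rw [wEdgeMid k x (by omega) (by omega) hk hm] at hmem
      have hw1 : wa k (2*du - 1) = (du : ZMod k) := by
        rw [show 2*du - 1 = 2*(du-1)+1 by omega, wa_odd, Nat.cast_sub (by omega : 1 ≤ du)]
        ring
      have hw2 : wa k (2*du) = -(du : ZMod k) := wa_even k (by omega)
      rw [hw1, hw2, hdu, show x + -(du : ZMod k) = x - du by ring, ← hyv, hemu, hemv] at hmem
      exact hmem
    · -- j = 2*(k - du)
      refine ⟨iv, hivm, ?_⟩
      set c : ℕ := k - du with hc
      have hc1 : 1 ≤ c := by omega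
      have hc2 : c ≤ m - 1 := by omega
      have hcast : ((c : ℕ) : ZMod k) = -(du : ZMod k) := by
        rw [hc, Nat.cast_sub (by omega : du ≤ k), ZMod.natCast_self]
        ring
      have hmem := wWalk_edge_mem k x hk hm (j := 2*c) (by omega)
      rw [wEdgeMid k x (by omega) (by omega) hk hm] at hmem
      have hw1 : wa k (2*c - 1) = -(du : ZMod k) := by
        rw [show 2*c - 1 = 2*(c-1)+1 by omega, wa_odd, Nat.cast_sub (by omega : 1 ≤ c), ← hcast]
        ring
      have hw2 : wa k (2*c) = (du : ZMod k) := by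
        rw [wa_even k (by omega), hcast]
        ring
      rw [hw1, hw2, hdu, show x + -(du : ZMod k) = x - du by ring, ← hyv, hemu, hemv,
        Sym2.eq_swap] at hmem
      exact hmem
  · -- odd sum, sv = 2 * iv + 1
    have hsv2 : sv = 2 * iv + 1 := by omega
    have hsum : yu + yv = 2*x + 1 := by
      rw [← hs, hsv2]; push_cast; ring
    have hyv : yv = x + 1 - (du : ZMod k) := by linear_combination hsum + hdu
    rcases Nat.eq_zero_or_pos du with hdz | hdz
    · -- j = 1
      refine ⟨iv, hivm, ?_⟩
      have hmem := wWalk_edge_mem k x hk hm (j := 1) (by omega)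
      rw [wEdgeMid k x (by omega) (by omega) hk hm] at hmem
      have hw1 : wa k 0 = 0 := wa_zero k
      have hw2 : wa k 1 = 1 := by
        have := wa_odd k 0
        simpa using this
      have hxa : x + wa k 0 = yu := by rw [hw1, ← hdu, hdz]; push_cast; ring
      have hxb : x + wa k 1 = yv := by rw [hw2, hyv, hdz]; push_cast; ring
      rw [hxa, hxb, hemu, hemv] at hmem
      exact hmem
    rcases Nat.lt_or_ge du (m+1) with h | h
    · -- 1 ≤ du ≤ m, j = 2*du - 1, edge (wa(2(du-1)), wa(2(du-1)+1)) = (1-du, du)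
      refine ⟨iv, hivm, ?_⟩
      have hmem := wWalk_edge_mem k x hk hm (j := 2*(du-1)+1) (by omega)
      rw [wEdgeMid k x (j := 2*(du-1)+1) (by omega) (by omega) hk hm] at hmem
      have hw1 : wa k (2*(du-1)+1 - 1) = 1 - (du : ZMod k) := by
        rw [show 2*(du-1)+1-1 = 2*(du-1) by omega, wa_even k (by omega),
          Nat.cast_sub (by omega : 1 ≤ du)]
        ring
      have hw2 : wa k (2*(du-1)+1) = (du : ZMod k) := by
        rw [wa_odd, Nat.cast_sub (by omega : 1 ≤ du)]
        ring
      rw [hw1, hw2, hdu, show x + (1 - (du:ZMod k)) = x + 1 - du by ring, ← hyv, hemu, hemv,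
        Sym2.eq_swap] at hmem
      exact hmem
    · -- du ≥ m+1, t = k - du, j = 2*t+1, edge (wa(2t), wa(2t+1)) = (du, 1-du)
      refine ⟨iv, hivm, ?_⟩
      set t : ℕ := k - du with ht
      have ht1 : 1 ≤ t := by omega
      have ht2 : t ≤ m - 1 := by omega
      have hcast : ((t : ℕ) : ZMod k) = -(du : ZMod k) := by
        rw [ht, Nat.cast_sub (by omega : du ≤ k), ZMod.natCast_self]
        ring
      have hmem := wWalk_edge_mem k x hk hm (j := 2*t+1) (by omega)
      rw [wEdgeMid k x (by omega) (by omega) hk hm] at hmem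
      have hw1 : wa k (2*t+1 - 1) = (du : ZMod k) := by
        rw [show 2*t+1-1 = 2*t by omega, wa_even k (by omega), hcast]
        ring
      have hw2 : wa k (2*t+1) = 1 - (du : ZMod k) := by
        rw [wa_odd, hcast]
        ring
      rw [hw1, hw2, hdu, show x + (1 - (du:ZMod k)) = x + 1 - du by ring, ← hyv,
        hemu, hemv] at hmem
      exact hmem

lemma wCover (hk : k = 2 * m) (hm : 1 ≤ m) (e : Sym2 (Fin (k+1)))
    (he : e ∈ (⊤ : SimpleGraph (Fin (k+1))).edgeSet) :
    ∃ iv < m, e ∈ (wWalk k ((iv : ℕ) : ZMod k) hk hm).edges := by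
  induction e with
  | _ u v =>
    rw [SimpleGraph.mem_edgeSet, SimpleGraph.top_adj] at he
    rcases Nat.lt_or_ge (u : ℕ) k with hu | hu
    · rcases Nat.lt_or_ge (v : ℕ) k with hv | hv
      · exact wCover_mid k hk hm u v hu hv he
      · have hvw : v = winf k := Fin.ext (by simp [winf]; omega)
        obtain ⟨iv, hiv, hmem⟩ := wCover_inf k hk hm u hu
        refine ⟨iv, hiv, ?_⟩
        rwa [hvw, Sym2.eq_swap]
    · have huw : u = winf k := Fin.ext (by simp [winf]; omega)
      have hvk : (v : ℕ) < k := by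
        rcases Nat.lt_or_ge (v : ℕ) k with h | h
        · exact h
        · exfalso
          apply he
          apply Fin.ext
          have := u.isLt
          have := v.isLt
          omega
      obtain ⟨iv, hiv, hmem⟩ := wCover_inf k hk hm v hvk
      rw [huw]
      exact ⟨iv, hiv, hmem⟩

end Walecki6

section Walecki7
variable (k : ℕ) [NeZero k] {m : ℕ}

/-- The transversal edge `{b, b+1}` belongs to cycle `iv` when `b ≡ iv` mod `m`. -/
lemma wT_edge (hk : k = 2 * m) (hm : 1 ≤ m) {iv b : ℕ} (hiv : iv < m)
    (hb : b = iv ∨ b = iv + m) :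
    s(wemb k ((b : ℕ) : ZMod k), wemb k (((b : ℕ) : ZMod k) + 1))
      ∈ (wWalk k ((iv : ℕ) : ZMod k) hk hm).edges := by
  have hk2 : 2 ≤ k := by omega
  rcases hb with hb | hb
  · have hmem := wWalk_edge_mem k ((iv : ℕ) : ZMod k) hk hm (j := 1) (by omega)
    rw [wEdgeMid k _ (le_refl 1) (by omega) hk hm] at hmem
    have hw2 : wa k 1 = 1 := by
      have := wa_odd k 0
      simpa using this
    rw [show (1:ℕ) - 1 = 0 by rfl, wa_zero, add_zero, hw2] at hmem
    rw [hb]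
    exact hmem
  · have hmem := wWalk_edge_mem k ((iv : ℕ) : ZMod k) hk hm (j := k-1) (by omega)
    rw [wEdgeMid k _ (by omega) (by omega) hk hm] at hmem
    rw [show k-1-1 = 2*(m-1) by omega, wa_even k (by omega : m - 1 ≤ k),
      wa_last k hk hm] at hmem
    have hmm0 : (m : ZMod k) + (m : ZMod k) = 0 := by
      rw [← Nat.cast_add, show m + m = k by omega, ZMod.natCast_self]
    have hb1 : ((iv : ℕ) : ZMod k) + -((m-1 : ℕ) : ZMod k) = ((b:ℕ) : ZMod k) + 1 := by
      rw [hb, Nat.cast_sub hm]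
      push_cast
      linear_combination -hmm0
    have hb2 : ((iv : ℕ) : ZMod k) + ((m:ℕ) : ZMod k) = ((b:ℕ) : ZMod k) := by
      rw [hb]; push_cast; ring
    rw [hb1, hb2, Sym2.eq_swap] at hmem
    exact hmem

lemma wmod_cases {b iv : ℕ} (hm : 1 ≤ m) (hb : b < 2*m) (h : b % m = iv) :
    b = iv ∨ b = iv + m := by
  have h2 := Nat.div_add_mod b m
  rw [h] at h2
  have h3 : b / m < 2 := Nat.div_lt_of_lt_mul (by omega)
  interval_cases h4 : b / m <;> omega

lemma wmodd (hmo : m % 2 = 1) {iv : ℕ} (hiv : iv < m) :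
    (2 * (((m+1)/2 * iv) % m)) % m = iv := by
  have h1 : 2 * (((m+1)/2 * iv) % m) ≡ 2 * ((m+1)/2 * iv) [MOD m] :=
    Nat.ModEq.mul_left 2 (Nat.mod_modEq _ m)
  have h2 : 2 * ((m+1)/2 * iv) = iv + m * iv := by
    have hh : 2 * ((m+1)/2) = m + 1 := by omega
    calc 2 * ((m+1)/2 * iv) = (2*((m+1)/2)) * iv := by ring
    _ = (m+1) * iv := by rw [hh]
    _ = iv + m * iv := by ring
  have h3 : (iv + m * iv) % m = iv := by
    rw [Nat.add_mul_mod_self_left]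
    exact Nat.mod_eq_of_lt hiv
  calc (2 * (((m+1)/2 * iv) % m)) % m = (2 * ((m+1)/2 * iv)) % m := h1
  _ = iv := by rw [h2]; exact h3

lemma wpair_vals {b : ℕ} (hb : b + 1 < k) (x : Fin (k+1))
    (hx : x ∈ s(wemb k ((b:ℕ) : ZMod k), wemb k (((b:ℕ) : ZMod k) + 1))) :
    (x : ℕ) = b ∨ (x : ℕ) = b + 1 := by
  rw [Sym2.mem_iff] at hx
  rcases hx with rfl | rfl
  · left
    exact ZMod.val_cast_of_lt (by omega)
  · right
    show ((((b:ℕ) : ZMod k) + 1)).val = b + 1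
    rw [show (((b:ℕ) : ZMod k) + 1) = ((b + 1 : ℕ) : ZMod k) by push_cast; ring]
    exact ZMod.val_cast_of_lt hb

lemma winf_vals (hk2 : 2 ≤ k) (x : Fin (k+1))
    (hx : x ∈ s(winf k, wemb k ((0:ℕ) : ZMod k))) :
    (x : ℕ) = k ∨ (x : ℕ) = 0 := by
  rw [Sym2.mem_iff] at hx
  rcases hx with rfl | rfl
  · left; rfl
  · right
    exact ZMod.val_cast_of_lt (by omega)

end Walecki7

/-- Every complete graph `K_{k+1}` with `k` even admits a hamiltonian decomposition into
`k/2` edge-disjoint Hamilton cycles, together with a transversal: a matching containing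
exactly one edge from each of the `k/2` Hamilton cycles. -/
theorem stmt4 (k : ℕ) (hk : 2 ≤ k) (hke : Even k) :
    ∃ (c : Fin (k / 2) → Σ v : Fin (k + 1), (⊤ : SimpleGraph (Fin (k + 1))).Walk v v)
      (T : Fin (k / 2) → Sym2 (Fin (k + 1))),
      (∀ i, (c i).2.IsHamiltonianCycle) ∧
      (∀ i j, i ≠ j → ∀ e, e ∈ (c i).2.edges → e ∉ (c j).2.edges) ∧
      (∀ e ∈ (⊤ : SimpleGraph (Fin (k + 1))).edgeSet, ∃ i, e ∈ (c i).2.edges) ∧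
      -- the transversal: one edge from each cycle
      (∀ i, T i ∈ (c i).2.edges) ∧
      -- exactly one edge of the matching lies in each cycle
      (∀ i, ∀ e ∈ (c i).2.edges, (∃ j, e = T j) → e = T i) ∧
      -- the transversal is a matching: its edges are pairwise vertex-disjoint
      (∀ i j, i ≠ j → ∀ x : Fin (k + 1), x ∈ T i → x ∉ T j) := by
  obtain ⟨r, hr⟩ := hke
  haveI : NeZero k := ⟨by omega⟩
  have hkk : k = 2 * (k / 2) := by omega
  have hm : 1 ≤ k / 2 := by omega
  have hT : ∃ T : Fin (k / 2) → Sym2 (Fin (k + 1)),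
      (∀ i : Fin (k / 2), T i ∈ (wWalk k (((i : ℕ) : ZMod k)) hkk hm).edges) ∧
      (∀ i j : Fin (k / 2), i ≠ j → ∀ x : Fin (k + 1), x ∈ T i → x ∉ T j) := by
    rcases Nat.even_or_odd (k / 2) with ⟨m2, hm2⟩ | ⟨m2, hm2⟩
    · -- k/2 even : use the infinity edge for cycle 0
      refine ⟨fun i => if (i : ℕ) = 0 then s(winf k, wemb k ((0 : ℕ) : ZMod k))
        else if (i : ℕ) % 2 = 1 then
          s(wemb k (((i : ℕ) : ℕ) : ZMod k), wemb k ((((i : ℕ) : ℕ) : ZMod k) + 1))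
        else
          s(wemb k (((k/2 + (i : ℕ)) : ℕ) : ZMod k),
            wemb k ((((k/2 + (i : ℕ)) : ℕ) : ZMod k) + 1)), ?_, ?_⟩
      · intro i
        dsimp only
        split_ifs with h1 h2
        · have hmem := wWalk_edge_mem k (((i : ℕ) : ZMod k)) hkk hm (j := 0) (by omega)
          rw [wEdge0 k _ hkk hm] at hmem
          rw [h1] at hmem ⊢
          exact hmem
        · exact wT_edge k hkk hm i.isLt (Or.inl rfl)
        · exact wT_edge k hkk hm i.isLt (Or.inr (by omega))
      · have hget : ∀ (i : Fin (k/2)) (x : Fin (k+1)),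
            x ∈ (if (i : ℕ) = 0 then s(winf k, wemb k ((0 : ℕ) : ZMod k))
              else if (i : ℕ) % 2 = 1 then
                s(wemb k (((i : ℕ) : ℕ) : ZMod k), wemb k ((((i : ℕ) : ℕ) : ZMod k) + 1))
              else
                s(wemb k (((k/2 + (i : ℕ)) : ℕ) : ZMod k),
                  wemb k ((((k/2 + (i : ℕ)) : ℕ) : ZMod k) + 1))) →
            ((i:ℕ) = 0 ∧ ((x:ℕ) = k ∨ (x:ℕ) = 0)) ∨
            ((i:ℕ) ≠ 0 ∧ (i:ℕ) % 2 = 1 ∧ ((x:ℕ) = (i:ℕ) ∨ (x:ℕ) = (i:ℕ)+1)) ∨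
            ((i:ℕ) ≠ 0 ∧ (i:ℕ) % 2 ≠ 1 ∧
              ((x:ℕ) = k/2 + (i:ℕ) ∨ (x:ℕ) = k/2 + (i:ℕ)+1)) := by
          intro i x hx
          have hilt := i.isLt
          split_ifs at hx with h1 h2
          · exact Or.inl ⟨h1, winf_vals k (by omega) x hx⟩
          · exact Or.inr (Or.inl ⟨h1, h2, wpair_vals k (by omega) x hx⟩)
          · exact Or.inr (Or.inr ⟨h1, h2, wpair_vals k (by omega) x hx⟩)
        intro i j hne x hxi hxj
        have ha := hget i x hxi
        have hb := hget j x hxj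
        have hneval : (i:ℕ) ≠ (j:ℕ) := fun h => hne (Fin.ext h)
        have hilt := i.isLt
        have hjlt := j.isLt
        omega
    · -- k/2 odd : complete-mapping transversal
      have hmo : (k/2) % 2 = 1 := by omega
      refine ⟨fun i => s(wemb k (((2 * (((k/2+1)/2 * (i:ℕ)) % (k/2))) : ℕ) : ZMod k),
        wemb k ((((2 * (((k/2+1)/2 * (i:ℕ)) % (k/2))) : ℕ) : ZMod k) + 1)), ?_, ?_⟩
      · intro i
        dsimp only
        have hlt : ((k/2+1)/2 * (i:ℕ)) % (k/2) < k/2 := Nat.mod_lt _ (by omega)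
        exact wT_edge k hkk hm i.isLt
          (wmod_cases hm (by omega) (wmodd (m := k/2) hmo i.isLt))
      · intro i j hne x hxi hxj
        dsimp only at hxi hxj
        have hlti : ((k/2+1)/2 * (i:ℕ)) % (k/2) < k/2 := Nat.mod_lt _ (by omega)
        have hltj : ((k/2+1)/2 * (j:ℕ)) % (k/2) < k/2 := Nat.mod_lt _ (by omega)
        have ha := wpair_vals k (by omega) x hxi
        have hb := wpair_vals k (by omega) x hxj
        have hai := wmod_cases (m := k/2) hm (by omega) (wmodd (m := k/2) hmo i.isLt)
        have haj := wmod_cases (m := k/2) hm (by omega) (wmodd (m := k/2) hmo j.isLt)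
        have hneval : (i:ℕ) ≠ (j:ℕ) := fun h => hne (Fin.ext h)
        omega
  obtain ⟨T, hTmem, hTdisj⟩ := hT
  refine ⟨fun i => ⟨winf k, wWalk k (((i : ℕ) : ZMod k)) hkk hm⟩, T, ?_, ?_, ?_, hTmem, ?_,
    hTdisj⟩
  · intro i
    exact wWalk_isHamCycle k _ hkk hm
  · intro i j hij e hei
    exact wDisj k hkk hm i.isLt j.isLt (fun h => hij (Fin.ext h)) e hei
  · intro e he
    obtain ⟨iv, hiv, hmem⟩ := wCover k hkk hm e he
    exact ⟨⟨iv, hiv⟩, hmem⟩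
  · intro i e he hej
    obtain ⟨j0, hj0⟩ := hej
    by_cases hij : j0 = i
    · rw [hj0, hij]
    · exfalso
      refine wDisj k hkk hm i.isLt j0.isLt (fun h => hij (Fin.ext h.symm)) e he ?_
      rw [hj0]
      exact hTmem j0
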